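/- Every total order on a finite set that is compatible with (i.e., extends) a given partial order can be reached: for any finite partially ordered set (X, P) there exists a linear order R on X with P ⊆ R, and moreover any two linear extensions of P are connected by a sequence of transpositions of adjacent elements that are incomparable in P. -/
import Mathlib

/-- Two relations `s, s'` differ by a transposition of two elements that are adjacent
in the linear order `s` and incomparable in the partial order `P`. -/
def IsAdjSwap {X : Type*} [DecidableEq X] (P : X → X → Prop) (s s' : X → X → Prop) : Prop :=
  ∃ a b : X, a ≠ b ∧ ¬ P a b ∧ ¬ P b a ∧ s a b ∧
    (¬ ∃ c, c ≠ a ∧ c ≠ b ∧ s a c ∧ s c b) ∧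
    ∀ x y, s' x y ↔ s (Equiv.swap a b x) (Equiv.swap a b y)

section Aux

variable {X : Type*} [Fintype X] [DecidableEq X]

omit [Fintype X] [DecidableEq X] in
/-- an adjacent inversion exists whenever an inversion exists -/
lemma adj_inversion [Fintype X] (s₁ s₂ : X → X → Prop) (h₁ : IsLinearOrder X s₁)
    (h₂ : IsLinearOrder X s₂) :
    ∀ n (x y : X), {c | c ≠ x ∧ c ≠ y ∧ s₁ x c ∧ s₁ c y}.ncard = n →
      x ≠ y → s₁ x y → s₂ y x →
      ∃ a b, a ≠ b ∧ s₁ a b ∧ s₂ b a ∧ ¬ ∃ c, c ≠ a ∧ c ≠ b ∧ s₁ a c ∧ s₁ c b := by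
  haveI := h₁; haveI := h₂
  intro n
  induction n using Nat.strong_induction_on with
  | _ n ih =>
    intro x y hcard hxy hs₁ hs₂
    rcases Set.eq_empty_or_nonempty {c | c ≠ x ∧ c ≠ y ∧ s₁ x c ∧ s₁ c y} with he | ⟨c, hc⟩
    · refine ⟨x, y, hxy, hs₁, hs₂, ?_⟩
      rintro ⟨c, hc1, hc2, hc3, hc4⟩
      exact absurd (Set.eq_empty_iff_forall_notMem.mp he c) (by simp [hc1, hc2, hc3, hc4])
    · obtain ⟨hcx, hcy, hxc, hcy'⟩ := hc
      have hsub1 : {d | d ≠ x ∧ d ≠ c ∧ s₁ x d ∧ s₁ d c} ⊂ {c | c ≠ x ∧ c ≠ y ∧ s₁ x c ∧ s₁ c y} := by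
        constructor
        · rintro d ⟨hd1, hd2, hd3, hd4⟩
          refine ⟨hd1, ?_, hd3, trans_of s₁ hd4 hcy'⟩
          rintro rfl
          exact hcy (antisymm_of s₁ hcy' hd4)
        · intro hsub
          exact absurd ((hsub ⟨hcx, hcy, hxc, hcy'⟩).2.1) (by simp)
      have hsub2 : {d | d ≠ c ∧ d ≠ y ∧ s₁ c d ∧ s₁ d y} ⊂ {c | c ≠ x ∧ c ≠ y ∧ s₁ x c ∧ s₁ c y} := by
        constructor
        · rintro d ⟨hd1, hd2, hd3, hd4⟩
          refine ⟨?_, hd2, trans_of s₁ hxc hd3, hd4⟩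
          rintro rfl
          exact hcx (antisymm_of s₁ hd3 hxc)
        · intro hsub
          exact absurd ((hsub ⟨hcx, hcy, hxc, hcy'⟩).1) (by simp)
      rcases total_of s₂ x c with hxc2 | hcx2
      · have : s₂ y c := trans_of s₂ hs₂ hxc2
        exact ih _ (hcard ▸ Set.ncard_lt_ncard hsub2 (Set.toFinite _)) c y rfl hcy hcy' this
      · exact ih _ (hcard ▸ Set.ncard_lt_ncard hsub1 (Set.toFinite _)) x c rfl
          (fun h => hcx h.symm) hxc hcx2

omit [Fintype X] in
lemma swap_iff (s₁ : X → X → Prop) (h₁ : IsLinearOrder X s₁) (a b : X)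
    (hab : a ≠ b) (hs₁ab : s₁ a b)
    (hnomid : ¬ ∃ c, c ≠ a ∧ c ≠ b ∧ s₁ a c ∧ s₁ c b) (u v : X)
    (h1 : ¬ (u = a ∧ v = b)) (h2 : ¬ (u = b ∧ v = a)) :
    (s₁ (Equiv.swap a b u) (Equiv.swap a b v) ↔ s₁ u v) := by
  haveI := h₁
  have hay : ∀ y, y ≠ a → y ≠ b → (s₁ a y ↔ s₁ b y) := by
    intro y hya hyb
    constructor
    · intro h
      by_contra hn
      exact hnomid ⟨y, hya, hyb, h, (total_of s₁ y b).resolve_right hn⟩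
    · intro h
      exact trans_of s₁ hs₁ab h
  have hya : ∀ y, y ≠ a → y ≠ b → (s₁ y a ↔ s₁ y b) := by
    intro y hya hyb
    constructor
    · intro h
      exact trans_of s₁ h hs₁ab
    · intro h
      by_contra hn
      exact hnomid ⟨y, hya, hyb, (total_of s₁ a y).resolve_right hn, h⟩
  by_cases hua : u = a
  · by_cases hva : v = a
    · rw [hua, hva, Equiv.swap_apply_left]
      exact iff_of_true (refl_of s₁ b) (refl_of s₁ a)
    · by_cases hvb : v = b
      · exact absurd ⟨hua, hvb⟩ h1
      · rw [hua, Equiv.swap_apply_left, Equiv.swap_apply_of_ne_of_ne hva hvb]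
        exact (hay v hva hvb).symm
  · by_cases hub : u = b
    · by_cases hva : v = a
      · exact absurd ⟨hub, hva⟩ h2
      · by_cases hvb : v = b
        · rw [hub, hvb, Equiv.swap_apply_right]
          exact iff_of_true (refl_of s₁ a) (refl_of s₁ b)
        · rw [hub, Equiv.swap_apply_right, Equiv.swap_apply_of_ne_of_ne hva hvb]
          exact hay v hva hvb
    · by_cases hva : v = a
      · rw [hva, Equiv.swap_apply_left, Equiv.swap_apply_of_ne_of_ne hua hub]
        exact (hya u hua hub).symm
      · by_cases hvb : v = b
        · rw [hvb, Equiv.swap_apply_right, Equiv.swap_apply_of_ne_of_ne hua hub]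
          exact hya u hua hub
        · rw [Equiv.swap_apply_of_ne_of_ne hua hub, Equiv.swap_apply_of_ne_of_ne hva hvb]

lemma connect (P : X → X → Prop) [IsPartialOrder X P] :
    ∀ n (s₁ s₂ : X → X → Prop),
      IsLinearOrder X s₁ → (∀ a b, P a b → s₁ a b) →
      IsLinearOrder X s₂ → (∀ a b, P a b → s₂ a b) →
      {p : X × X | p.1 ≠ p.2 ∧ s₁ p.1 p.2 ∧ s₂ p.2 p.1}.ncard = n →
      Relation.ReflTransGen (IsAdjSwap P) s₁ s₂ := by
  intro n
  induction n using Nat.strong_induction_on with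
  | _ n ih =>
    intro s₁ s₂ h₁ hP₁ h₂ hP₂ hcard
    haveI := h₁; haveI := h₂
    rcases Set.eq_empty_or_nonempty {p : X × X | p.1 ≠ p.2 ∧ s₁ p.1 p.2 ∧ s₂ p.2 p.1} with he | ⟨⟨x, y⟩, hxy, hs1, hs2⟩
    · -- no inversions: s₁ = s₂
      have : s₁ = s₂ := by
        funext u v
        apply propext
        have key : ∀ u v : X, s₁ u v → s₂ u v := by
          intro u v huv
          by_contra hn
          have hne : u ≠ v := by
            intro h
            rw [h] at hn
            exact hn (refl_of s₂ v)
          have : s₂ v u := (total_of s₂ u v).resolve_left hn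
          exact absurd (Set.eq_empty_iff_forall_notMem.mp he (u, v)) (by simp [hne, huv, this])
        constructor
        · exact key u v
        · intro huv
          by_contra hn
          have hne : u ≠ v := by
            intro h
            rw [h] at hn
            exact hn (refl_of s₁ v)
          have : s₁ v u := (total_of s₁ u v).resolve_left hn
          exact hne (antisymm_of s₂ huv (key v u this))
      rw [this]
    · -- get adjacent inversion
      obtain ⟨a, b, hab, hs₁ab, hs₂ba, hnomid⟩ :=
        adj_inversion s₁ s₂ h₁ h₂ _ x y rfl hxy hs1 hs2
      have hPab : ¬ P a b := fun h => hab (antisymm_of s₂ (hP₂ a b h) hs₂ba)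
      have hPba : ¬ P b a := fun h => hab (antisymm_of s₁ hs₁ab (hP₁ b a h))
      have hkey := swap_iff s₁ h₁ a b hab hs₁ab hnomid
      set s' : X → X → Prop := fun u v => s₁ (Equiv.swap a b u) (Equiv.swap a b v) with hs'
      have h' : IsLinearOrder X s' :=
        { refl := fun u => refl_of s₁ _
          trans := fun u v w h1 h2 => trans_of s₁ h1 h2
          antisymm := fun u v h1 h2 => (Equiv.swap a b).injective (antisymm_of s₁ h1 h2)
          total := fun u v => total_of s₁ _ _ }
      have hP' : ∀ u v, P u v → s' u v := by
        intro u v huv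
        have : ¬ (u = a ∧ v = b) := by rintro ⟨rfl, rfl⟩; exact hPab huv
        have h2' : ¬ (u = b ∧ v = a) := by rintro ⟨rfl, rfl⟩; exact hPba huv
        exact (hkey u v this h2').mpr (hP₁ u v huv)
      have hstep : IsAdjSwap P s₁ s' :=
        ⟨a, b, hab, hPab, hPba, hs₁ab, hnomid, fun x y => Iff.rfl⟩
      have hinv : {p : X × X | p.1 ≠ p.2 ∧ s' p.1 p.2 ∧ s₂ p.2 p.1}
          = {p : X × X | p.1 ≠ p.2 ∧ s₁ p.1 p.2 ∧ s₂ p.2 p.1} \ {(a, b)} := by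
        ext ⟨u, v⟩
        simp only [Set.mem_setOf_eq, Set.mem_diff, Set.mem_singleton_iff, Prod.mk.injEq]
        by_cases hcase1 : u = a ∧ v = b
        · obtain ⟨hu, hv⟩ := hcase1
          constructor
          · rintro ⟨huv, hsv, hsu⟩
            rw [hu, hv] at hsv
            simp only [hs', Equiv.swap_apply_left, Equiv.swap_apply_right] at hsv
            exact absurd (antisymm_of s₁ hs₁ab hsv) hab
          · rintro ⟨_, hne⟩
            exact absurd ⟨hu, hv⟩ hne
        · by_cases hcase2 : u = b ∧ v = a
          · obtain ⟨hu, hv⟩ := hcase2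
            constructor
            · rintro ⟨huv, hsv, hsu⟩
              rw [hu, hv] at hsu
              exact absurd (antisymm_of s₂ hsu hs₂ba) hab
            · rintro ⟨⟨huv, hsv, hsu⟩, _⟩
              rw [hu, hv] at hsu
              exact absurd (antisymm_of s₂ hsu hs₂ba) hab
          · constructor
            · rintro ⟨huv, hsv, hsu⟩
              exact ⟨⟨huv, (hkey u v hcase1 hcase2).mp hsv, hsu⟩, hcase1⟩
            · rintro ⟨⟨huv, hsv, hsu⟩, _⟩
              exact ⟨huv, (hkey u v hcase1 hcase2).mpr hsv, hsu⟩
      have hmem : (a, b) ∈ {p : X × X | p.1 ≠ p.2 ∧ s₁ p.1 p.2 ∧ s₂ p.2 p.1} :=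
        ⟨hab, hs₁ab, hs₂ba⟩
      have hss : {p : X × X | p.1 ≠ p.2 ∧ s' p.1 p.2 ∧ s₂ p.2 p.1}
          ⊂ {p : X × X | p.1 ≠ p.2 ∧ s₁ p.1 p.2 ∧ s₂ p.2 p.1} := by
        rw [hinv]
        exact (Set.ssubset_iff_of_subset Set.diff_subset).mpr ⟨(a, b), hmem, by simp⟩
      have hlt : {p : X × X | p.1 ≠ p.2 ∧ s' p.1 p.2 ∧ s₂ p.2 p.1}.ncard < n :=
        hcard ▸ Set.ncard_lt_ncard hss (Set.toFinite _)
      exact Relation.ReflTransGen.head hstep (ih _ hlt s' s₂ h' hP' h₂ hP₂ rfl)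

end Aux

/-- Every finite partial order admits a linear extension, and any two linear
extensions are connected by a sequence of transpositions of adjacent elements
that are incomparable in the partial order. -/
theorem stmt_11 (X : Type*) [Fintype X] [DecidableEq X] (P : X → X → Prop) [IsPartialOrder X P] :
    (∃ s : X → X → Prop, IsLinearOrder X s ∧ ∀ a b, P a b → s a b) ∧
    ∀ s₁ s₂ : X → X → Prop,
      IsLinearOrder X s₁ → (∀ a b, P a b → s₁ a b) →
      IsLinearOrder X s₂ → (∀ a b, P a b → s₂ a b) →
      Relation.ReflTransGen (IsAdjSwap P) s₁ s₂ := by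
  constructor
  · obtain ⟨s, hs, hPs⟩ := extend_partialOrder P
    exact ⟨s, hs, fun a b h => hPs a b h⟩
  · intro s₁ s₂ h₁ hP₁ h₂ hP₂
    exact connect P _ s₁ s₂ h₁ hP₁ h₂ hP₂ rfl
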